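/- arXiv:1412.7666 — 2 statements merged into one kernel-verified Lean document; each statement's English description precedes it below -/
import Mathlib

section
/- For any finite poset S with n elements and any linear extension P of S, the multivariate pedestal polynomial 𝔥_P(x) = Σ_{Q linear extension of S} Π_{s∈S} x_{q_{P,Q}(s)} does not depend on the choice of the linear extension P. -/
/-- `l` (0-indexed) is a `(P,Q)`-disagreement position: the `(l+1)`-st element
in `Q`-order precedes the `l`-th element in `P`-order. -/
def disag {S : Type} {n : ℕ} (P Q : S ≃ Fin n) (l : ℕ) : Prop :=
  ∃ h : l + 1 < n, P (Q.symm ⟨l + 1, h⟩) < P (Q.symm ⟨l, Nat.lt_of_succ_lt h⟩)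

open Classical in
/-- The `P`-pedestal of `Q`: `q_{P,Q}(α_k)` is the number of
`(P,Q)`-disagreement positions `l < k`, where `α_k` is the `k`-th element in
`Q`-order. -/
noncomputable def ped {S : Type} {n : ℕ} (P Q : S ≃ Fin n) (s : S) : ℕ :=
  ((Finset.range (Q s : ℕ)).filter fun l => disag P Q l).card

/-- `T` is a linear extension of the poset `S` (with `n` elements), encoded as
a bijection `S ≃ Fin n` compatible with the partial order of `S`. -/
def IsLinExt {S : Type} [PartialOrder S] (n : ℕ) (T : S ≃ Fin n) : Prop :=
  ∀ a b : S, a ≤ b → T a ≤ T b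

open Classical in
/-- The multivariate pedestal polynomial
`𝔥_P = Σ_{Q linear extension of S} Π_{s∈S} x_{q_{P,Q}(s)}`. -/
noncomputable def hpS {S : Type} [PartialOrder S] [Fintype S] [DecidableEq S]
    (n : ℕ) (P : S ≃ Fin n) : MvPolynomial ℕ ℤ :=
  ∑ Q ∈ Finset.univ.filter (fun Q : S ≃ Fin n => IsLinExt n Q),
    ∏ s : S, MvPolynomial.X (ped P Q s)

/- ### Auxiliary material -/

lemma swap_lt_of_lt {n : ℕ} {j j' u v : Fin n} (hjj : (j : ℕ) + 1 = j')
    (hex : ¬(u = j ∧ v = j')) (h : u < v) :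
    Equiv.swap j j' u < Equiv.swap j j' v := by
  have h' : (u : ℕ) < (v : ℕ) := h
  rw [Equiv.swap_apply_def, Equiv.swap_apply_def]
  split_ifs <;>
    simp only [Fin.lt_def, ← Fin.val_eq_val, not_and] at * <;> omega

lemma swap_lt_iff {n : ℕ} {j j' u v : Fin n} (hjj : (j : ℕ) + 1 = j')
    (hne : u ≠ v) (h1 : ¬(u = j ∧ v = j')) (h2 : ¬(v = j ∧ u = j')) :
    Equiv.swap j j' u < Equiv.swap j j' v ↔ u < v := by
  constructor
  · intro h
    rcases lt_or_gt_of_ne hne with h' | h'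
    · exact h'
    · exact absurd (swap_lt_of_lt hjj h2 h') (asymm h)
  · exact swap_lt_of_lt hjj h1

lemma isLinExt_trans_swap {S : Type} [PartialOrder S] {n : ℕ} (P : S ≃ Fin n)
    (hP : IsLinExt n P) {j j' : Fin n} (hjj : (j : ℕ) + 1 = j')
    (hinc : ¬ P.symm j ≤ P.symm j') :
    IsLinExt n (P.trans (Equiv.swap j j')) := by
  intro x y hxy
  simp only [Equiv.trans_apply]
  rcases eq_or_ne x y with rfl | hne
  · exact le_refl _
  have hlt : P x < P y := lt_of_le_of_ne (hP x y hxy) fun e => hne (P.injective e)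
  have hex : ¬(P x = j ∧ P y = j') := by
    rintro ⟨e1, e2⟩
    apply hinc
    rw [← e1, ← e2, Equiv.symm_apply_apply, Equiv.symm_apply_apply]
    exact hxy
  exact le_of_lt (swap_lt_of_lt hjj hex hlt)

lemma swap_trans_eq {α β : Type} [DecidableEq α] [DecidableEq β]
    (Q : α ≃ β) (a b : α) :
    (Equiv.swap a b).trans Q = Q.trans (Equiv.swap (Q a) (Q b)) := by
  ext x
  simp only [Equiv.trans_apply]
  rcases eq_or_ne x a with rfl | hxa
  · simp
  rcases eq_or_ne x b with rfl | hxb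
  · simp
  · rw [Equiv.swap_apply_of_ne_of_ne hxa hxb,
      Equiv.swap_apply_of_ne_of_ne (Q.injective.ne_iff.mpr hxa)
        (Q.injective.ne_iff.mpr hxb)]

/-- Swap `a` and `b` in `Q` if they occupy adjacent positions. -/
def swapIf {S : Type} [DecidableEq S] {n : ℕ} (a b : S) (Q : S ≃ Fin n) :
    S ≃ Fin n :=
  if ((Q a : ℕ) + 1 = Q b ∨ (Q b : ℕ) + 1 = Q a) then (Equiv.swap a b).trans Q
  else Q

lemma swapIf_pos {S : Type} [DecidableEq S] {n : ℕ} {a b : S} {Q : S ≃ Fin n}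
    (hc : (Q a : ℕ) + 1 = Q b ∨ (Q b : ℕ) + 1 = Q a) :
    swapIf a b Q = (Equiv.swap a b).trans Q := if_pos hc

lemma swapIf_neg {S : Type} [DecidableEq S] {n : ℕ} {a b : S} {Q : S ≃ Fin n}
    (hc : ¬((Q a : ℕ) + 1 = Q b ∨ (Q b : ℕ) + 1 = Q a)) :
    swapIf a b Q = Q := if_neg hc

/-- The summand of the pedestal polynomial. -/
noncomputable def pedTerm {S : Type} [Fintype S] {n : ℕ} (P Q : S ≃ Fin n) :
    MvPolynomial ℕ ℤ :=
  ∏ s : S, MvPolynomial.X (ped P Q s)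

lemma pedTerm_congr {S : Type} [Fintype S] {n : ℕ} {P1 Q1 P2 Q2 : S ≃ Fin n}
    (h : disag P1 Q1 = disag P2 Q2) : pedTerm P1 Q1 = pedTerm P2 Q2 := by
  have key : ∀ P Q : S ≃ Fin n, pedTerm P Q =
      ∏ k : Fin n, MvPolynomial.X (ped P Q (Q.symm k)) := fun P Q =>
    (Equiv.prod_comp Q.symm fun s => MvPolynomial.X (ped P Q s)).symm
  rw [key, key]
  refine Finset.prod_congr rfl fun k _ => ?_
  simp only [ped, Equiv.apply_symm_apply]
  rw [h]

open Classical in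
lemma hpS_eq_sum_pedTerm {S : Type} [PartialOrder S] [Fintype S] [DecidableEq S]
    (n : ℕ) (P : S ≃ Fin n) :
    hpS n P = ∑ Q ∈ Finset.univ.filter (fun Q : S ≃ Fin n => IsLinExt n Q),
      pedTerm P Q := rfl

lemma hpS_step {S : Type} [PartialOrder S] [Fintype S] [DecidableEq S] {n : ℕ}
    (P : S ≃ Fin n) {j j' : Fin n} (hjj : (j : ℕ) + 1 = j') {a b : S}
    (hPa : P a = j) (hPb : P b = j')
    (h1 : ¬ a ≤ b) (h2 : ¬ b ≤ a) :
    hpS n P = hpS n (P.trans (Equiv.swap j j')) := by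
  have ha : P.symm j = a := by rw [← hPa, Equiv.symm_apply_apply]
  have hb : P.symm j' = b := by rw [← hPb, Equiv.symm_apply_apply]
  -- swapIf maps linear extensions to linear extensions
  have hφlin : ∀ Q : S ≃ Fin n, IsLinExt n Q → IsLinExt n (swapIf a b Q) := by
    intro Q hQ
    by_cases hc : ((Q a : ℕ) + 1 = Q b ∨ (Q b : ℕ) + 1 = Q a)
    · rw [swapIf_pos hc, swap_trans_eq]
      rcases hc with hc | hc
      · refine isLinExt_trans_swap Q hQ hc ?_
        rw [Q.symm_apply_apply, Q.symm_apply_apply]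
        exact h1
      · rw [Equiv.swap_comm]
        refine isLinExt_trans_swap Q hQ hc ?_
        rw [Q.symm_apply_apply, Q.symm_apply_apply]
        exact h2
    · rw [swapIf_neg hc]; exact hQ
  -- swapIf is an involution
  have hφinv : ∀ Q : S ≃ Fin n, swapIf a b (swapIf a b Q) = Q := by
    intro Q
    by_cases hc : ((Q a : ℕ) + 1 = Q b ∨ (Q b : ℕ) + 1 = Q a)
    · have e1 : swapIf a b Q = (Equiv.swap a b).trans Q := swapIf_pos hc
      have ea : (swapIf a b Q) a = Q b := by
        rw [e1]; simp [Equiv.trans_apply]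
      have eb : (swapIf a b Q) b = Q a := by
        rw [e1]; simp [Equiv.trans_apply, Equiv.swap_apply_right]
      have hc2 : (((swapIf a b Q) a : ℕ) + 1 = (swapIf a b Q) b ∨
          ((swapIf a b Q) b : ℕ) + 1 = (swapIf a b Q) a) := by
        rw [ea, eb]; tauto
      rw [swapIf_pos hc2, e1]
      ext x
      simp [Equiv.trans_apply]
    · rw [swapIf_neg hc, swapIf_neg hc]
  -- the pedestal term matches
  have hterm : ∀ Q : S ≃ Fin n,
      pedTerm P Q = pedTerm (P.trans (Equiv.swap j j')) (swapIf a b Q) := by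
    intro Q
    by_cases hc : ((Q a : ℕ) + 1 = Q b ∨ (Q b : ℕ) + 1 = Q a)
    · rw [swapIf_pos hc]
      refine pedTerm_congr ?_
      have key : ∀ m : Fin n,
          (P.trans (Equiv.swap j j')) (((Equiv.swap a b).trans Q).symm m) =
            P (Q.symm m) := by
        intro m
        have e2 : ((Equiv.swap a b).trans Q).symm m = Equiv.swap a b (Q.symm m) := by
          simp [Equiv.symm_trans_apply]
        rw [e2]
        simp only [Equiv.trans_apply]
        rcases eq_or_ne (Q.symm m) a with e | hma
        · rw [e, Equiv.swap_apply_left, hPb, hPa, Equiv.swap_apply_right]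
        rcases eq_or_ne (Q.symm m) b with e | hmb
        · rw [e, Equiv.swap_apply_right, hPa, hPb, Equiv.swap_apply_left]
        · rw [Equiv.swap_apply_of_ne_of_ne hma hmb,
            Equiv.swap_apply_of_ne_of_ne
              (by rw [← hPa] at *; exact fun e => hma (P.injective e))
              (by rw [← hPb] at *; exact fun e => hmb (P.injective e))]
      funext l
      apply propext
      refine exists_congr fun h => ?_
      rw [key, key]
    · rw [swapIf_neg hc]
      refine pedTerm_congr ?_
      funext l
      apply propext
      refine exists_congr fun h => Iff.symm ?_
      have hne : P (Q.symm ⟨l + 1, h⟩) ≠ P (Q.symm ⟨l, Nat.lt_of_succ_lt h⟩) := by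
        intro e
        have := Q.symm.injective (P.injective e)
        simp [Fin.ext_iff] at this
      have hx1 : ¬(P (Q.symm ⟨l + 1, h⟩) = j ∧
          P (Q.symm ⟨l, Nat.lt_of_succ_lt h⟩) = j') := by
        rintro ⟨e1', e2'⟩
        have ea' : Q.symm ⟨l + 1, h⟩ = a := by rw [← ha, ← e1', Equiv.symm_apply_apply]
        have eb' : Q.symm ⟨l, Nat.lt_of_succ_lt h⟩ = b := by
          rw [← hb, ← e2', Equiv.symm_apply_apply]
        apply hc
        right
        have hQa : Q a = ⟨l + 1, h⟩ := by rw [← ea', Q.apply_symm_apply]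
        have hQb : Q b = ⟨l, Nat.lt_of_succ_lt h⟩ := by
          rw [← eb', Q.apply_symm_apply]
        simp [hQa, hQb]
      have hx2 : ¬(P (Q.symm ⟨l, Nat.lt_of_succ_lt h⟩) = j ∧
          P (Q.symm ⟨l + 1, h⟩) = j') := by
        rintro ⟨e1', e2'⟩
        have ea' : Q.symm ⟨l, Nat.lt_of_succ_lt h⟩ = a := by
          rw [← ha, ← e1', Equiv.symm_apply_apply]
        have eb' : Q.symm ⟨l + 1, h⟩ = b := by rw [← hb, ← e2', Equiv.symm_apply_apply]
        apply hc
        left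
        have hQa : Q a = ⟨l, Nat.lt_of_succ_lt h⟩ := by rw [← ea', Q.apply_symm_apply]
        have hQb : Q b = ⟨l + 1, h⟩ := by rw [← eb', Q.apply_symm_apply]
        simp [hQa, hQb]
      simp only [Equiv.trans_apply]
      exact swap_lt_iff hjj hne hx1 hx2
  -- conclude by reindexing the sum with the involution swapIf a b
  rw [hpS_eq_sum_pedTerm, hpS_eq_sum_pedTerm]
  refine Finset.sum_nbij' (swapIf a b) (swapIf a b) ?_ ?_ ?_ ?_ ?_
  · intro Q hQ
    simp only [Finset.mem_filter, Finset.mem_univ, true_and] at hQ ⊢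
    exact hφlin Q hQ
  · intro Q hQ
    simp only [Finset.mem_filter, Finset.mem_univ, true_and] at hQ ⊢
    exact hφlin Q hQ
  · intro Q _
    exact hφinv Q
  · intro Q _
    exact hφinv Q
  · intro Q _
    exact hterm Q

open Classical in
/-- Pairs on which two linear orders disagree. -/
noncomputable def invSet {S : Type} [Fintype S] {n : ℕ} (P P' : S ≃ Fin n) :
    Finset (S × S) :=
  Finset.univ.filter fun p => P p.1 < P p.2 ∧ P' p.2 < P' p.1

lemma exists_descent {n : ℕ} (τ : Fin n ≃ Fin n) (hτ : ∃ k, τ k ≠ k) :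
    ∃ i : ℕ, ∃ h : i + 1 < n, τ ⟨i + 1, h⟩ < τ ⟨i, Nat.lt_of_succ_lt h⟩ := by
  by_contra hcon
  push_neg at hcon
  have hmono : StrictMono τ := by
    cases n with
    | zero => exact fun k => k.elim0
    | succ m =>
      rw [Fin.strictMono_iff_lt_succ]
      intro i
      have h2 : (i : ℕ) + 1 < m + 1 := by omega
      have hle := hcon (i : ℕ) h2
      have e1 : Fin.castSucc i = (⟨(i : ℕ), Nat.lt_of_succ_lt h2⟩ : Fin (m + 1)) := by
        apply Fin.ext; simp
      have e2 : i.succ = (⟨(i : ℕ) + 1, h2⟩ : Fin (m + 1)) := by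
        apply Fin.ext; simp
      rw [e1, e2]
      refine lt_of_le_of_ne hle fun e => ?_
      have := τ.injective e
      simp [Fin.ext_iff] at this
  obtain ⟨k, hk⟩ := hτ
  apply hk
  have hwf : WellFoundedLT (Fin n) := inferInstance
  have hrange : Set.range ⇑τ = Set.range (id : Fin n → Fin n) := by
    rw [Set.range_id, Equiv.range_eq_univ]
  have : ⇑τ = id := (hmono.range_inj strictMono_id).mp hrange
  exact congrFun this k

lemma hpS_aux {S : Type} [PartialOrder S] [Fintype S] [DecidableEq S] {n : ℕ} :
    ∀ N : ℕ, ∀ P P' : S ≃ Fin n, IsLinExt n P → IsLinExt n P' →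
      (invSet P P').card ≤ N → hpS n P = hpS n P' := by
  intro N
  induction N with
  | zero =>
    intro P P' hP hP' hcard
    by_cases hPP : P = P'
    · rw [hPP]
    · exfalso
      obtain ⟨i, h, hdesc⟩ := exists_descent (P.symm.trans P')
        (by
          by_contra hc
          push_neg at hc
          apply hPP
          ext s
          have := hc (P s)
          have h' : P s = P' s := by simpa using this.symm
          exact congrArg Fin.val h')
      set j : Fin n := ⟨i, Nat.lt_of_succ_lt h⟩
      set j' : Fin n := ⟨i + 1, h⟩
      have hmem : (P.symm j, P.symm j') ∈ invSet P P' := by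
        simp only [invSet, Finset.mem_filter, Finset.mem_univ, true_and]
        constructor
        · simp only [Equiv.apply_symm_apply]
          exact Fin.mk_lt_mk.mpr (by omega)
        · exact hdesc
      have := Finset.card_pos.mpr ⟨_, hmem⟩
      omega
  | succ N ih =>
    intro P P' hP hP' hcard
    by_cases hPP : P = P'
    · rw [hPP]
    obtain ⟨i, h, hdesc⟩ := exists_descent (P.symm.trans P')
      (by
        by_contra hc
        push_neg at hc
        apply hPP
        ext s
        have := hc (P s)
        have h' : P s = P' s := by simpa using this.symm
        exact congrArg Fin.val h')
    set j : Fin n := ⟨i, Nat.lt_of_succ_lt h⟩ with hj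
    set j' : Fin n := ⟨i + 1, h⟩ with hj'
    have hjj : (j : ℕ) + 1 = j' := rfl
    set a := P.symm j with hadef
    set b := P.symm j' with hbdef
    have hdesc' : P' b < P' a := hdesc
    have h1 : ¬ a ≤ b := by
      intro hab
      exact absurd (hP' a b hab) (not_le_of_gt hdesc')
    have h2 : ¬ b ≤ a := by
      intro hab
      have := hP b a hab
      simp only [hadef, hbdef, Equiv.apply_symm_apply] at this
      have : (i : ℕ) + 1 ≤ i := this
      omega
    have hPa : P a = j := P.apply_symm_apply j
    have hPb : P b = j' := P.apply_symm_apply j'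
    have hstep : hpS n P = hpS n (P.trans (Equiv.swap j j')) :=
      hpS_step P hjj hPa hPb h1 h2
    set P'' := P.trans (Equiv.swap j j') with hP''
    have hP''lin : IsLinExt n P'' :=
      isLinExt_trans_swap P hP hjj (by rw [hadef, hbdef] at h1; exact h1)
    -- the inversion set strictly decreases
    have hsub : invSet P'' P' ⊆ invSet P P' := by
      intro p hp
      simp only [invSet, Finset.mem_filter, Finset.mem_univ, true_and] at hp ⊢
      obtain ⟨hx, hy⟩ := hp
      refine ⟨?_, hy⟩
      rcases lt_trichotomy (P p.1) (P p.2) with hlt | heq | hgt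
      · exact hlt
      · exact absurd (P.injective heq ▸ hy) (lt_irrefl _)
      · exfalso
        by_cases hex : (P p.2 = j ∧ P p.1 = j')
        · -- p.2 = a, p.1 = b, and hy : P' p.2 < P' p.1 means P' a < P' b
          have e1 : p.2 = a := by rw [hadef, ← hex.1, Equiv.symm_apply_apply]
          have e2 : p.1 = b := by rw [hbdef, ← hex.2, Equiv.symm_apply_apply]
          rw [e1, e2] at hy
          exact absurd hy (asymm hdesc')
        · have := swap_lt_of_lt hjj hex hgt
          simp only [hP'', Equiv.trans_apply] at hx
          exact absurd hx (asymm this)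
    have hmem : (a, b) ∈ invSet P P' := by
      simp only [invSet, Finset.mem_filter, Finset.mem_univ, true_and]
      refine ⟨?_, hdesc'⟩
      rw [hPa, hPb]
      exact Fin.mk_lt_mk.mpr (by omega)
    have hnmem : (a, b) ∉ invSet P'' P' := by
      simp only [invSet, Finset.mem_filter, Finset.mem_univ, true_and]
      rintro ⟨hx, -⟩
      simp only [hP'', Equiv.trans_apply, hPa, hPb, Equiv.swap_apply_left,
        Equiv.swap_apply_right] at hx
      have : (i : ℕ) + 1 < i := hx
      omega
    have hss : invSet P'' P' ⊂ invSet P P' := ⟨hsub, fun hsub' => hnmem (hsub' hmem)⟩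
    have hlt : (invSet P'' P').card < (invSet P P').card := Finset.card_lt_card hss
    exact hstep.trans (ih P'' P' hP''lin hP' (by omega))

/-- the multivariate pedestal polynomial of a finite poset does
not depend on the choice of the linear extension `P`. -/
theorem stmt17 {S : Type} [PartialOrder S] [Fintype S] [DecidableEq S] (n : ℕ)
    (hn : Fintype.card S = n) (P P' : S ≃ Fin n)
    (hP : IsLinExt n P) (hP' : IsLinExt n P') :
    hpS n P = hpS n P' := by
  exact hpS_aux (invSet P P').card P P' hP hP' le_rfl
end

section
/- For a fixed linear extension P of a finite poset S with n elements, the map 𝔔 ↦ (q_{P,Q(𝔔)}, Π(𝔔 − q_{P,Q(𝔔)})) is a bijection between the set of order-preserving maps S → ℤ≥0 ('reverse partitions on S') and the product of the set of P-pedestals {q_{P,Q} : Q linear extension of S} with the set of partitions having at most n parts; moreover the bijection is volume-additive: |𝔔| = |q_{P,Q(𝔔)}| + |Π(𝔔 − q_{P,Q(𝔔)})|. -/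
/-- `Q` is the linear order induced by the filling `f` with `P`-tie-breaking. -/
def Compat {S : Type} {n : ℕ} (P : S ≃ Fin n) (f : S → ℕ) (Q : S ≃ Fin n) : Prop :=
  ∀ a b : S, Q a < Q b ↔ (f a < f b ∨ (f a = f b ∧ P a < P b))

open Classical in
/-- The linear extension `Q(𝔔)` induced by `f = 𝔔` with `P`-tie-breaking. -/
noncomputable def QOf {S : Type} {n : ℕ} (P : S ≃ Fin n) (f : S → ℕ) : S ≃ Fin n :=
  if h : ∃ Q : S ≃ Fin n, Compat P f Q then h.choose else P

/-- `b_St : 𝔔 ↦ (q_{P,Q(𝔔)}, Π(𝔔 − q_{P,Q(𝔔)}))`; the partition `Π(R)` with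
at most `n` parts is recorded as the multiset of the `n` values of `R`. -/
noncomputable def bSt {S : Type} [Fintype S] {n : ℕ} (P : S ≃ Fin n) (f : S → ℕ) :
    (S → ℕ) × Multiset ℕ :=
  (ped P (QOf P f), Finset.univ.val.map fun a => f a - ped P (QOf P f) a)

namespace Stmt18Aux

variable {S : Type} {n : ℕ}

open Classical Finset

noncomputable def cnt (P Q : S ≃ Fin n) (k : ℕ) : ℕ :=
  ((Finset.range k).filter fun l => disag P Q l).card

lemma ped_eq_cnt (P Q : S ≃ Fin n) (s : S) : ped P Q s = cnt P Q (Q s) := rfl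

lemma cnt_mono (P Q : S ≃ Fin n) {j k : ℕ} (h : j ≤ k) : cnt P Q j ≤ cnt P Q k :=
  Finset.card_le_card (Finset.filter_subset_filter _ (Finset.range_subset_range.2 h))

lemma cnt_succ (P Q : S ≃ Fin n) (k : ℕ) :
    cnt P Q (k + 1) = cnt P Q k + if disag P Q k then 1 else 0 := by
  unfold cnt
  rw [Finset.range_add_one, Finset.filter_insert]
  split
  · rw [Finset.card_insert_of_notMem (by simp)]
  · simp

lemma lt_of_not_disag (P Q : S ≃ Fin n) {k : ℕ} (hk : k + 1 < n) (h : ¬ disag P Q k) :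
    P (Q.symm ⟨k, Nat.lt_of_succ_lt hk⟩) < P (Q.symm ⟨k + 1, hk⟩) := by
  have h2 : ¬ P (Q.symm ⟨k + 1, hk⟩) < P (Q.symm ⟨k, Nat.lt_of_succ_lt hk⟩) :=
    fun hc => h ⟨hk, hc⟩
  refine lt_of_le_of_ne (not_lt.1 h2) ?_
  intro he
  have := Q.symm.injective (P.injective he)
  simp [Fin.ext_iff] at this

lemma chain (P Q : S ≃ Fin n) :
    ∀ k (hk : k < n) j (hj : j < k),
      cnt P Q j < cnt P Q k ∨
        (cnt P Q j = cnt P Q k ∧ P (Q.symm ⟨j, hj.trans hk⟩) < P (Q.symm ⟨k, hk⟩)) := by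
  intro k
  induction k with
  | zero => intro _ j hj; omega
  | succ k ih =>
    intro hk j hj
    have hk' : k < n := Nat.lt_of_succ_lt hk
    have step : cnt P Q k < cnt P Q (k + 1) ∨
        (cnt P Q k = cnt P Q (k + 1) ∧ P (Q.symm ⟨k, hk'⟩) < P (Q.symm ⟨k + 1, hk⟩)) := by
      rw [cnt_succ]
      by_cases hd : disag P Q k
      · left; simp [hd]
      · right
        refine ⟨by simp [hd], lt_of_not_disag P Q hk hd⟩
    rcases Nat.lt_or_ge j k with hjk | hjk
    · rcases ih hk' j hjk with h1 | ⟨h1, h1'⟩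
      · left; exact h1.trans_le (cnt_mono P Q (Nat.le_succ k))
      · rcases step with h2 | ⟨h2, h2'⟩
        · left; omega
        · right; exact ⟨h1.trans h2, h1'.trans h2'⟩
    · have hje : j = k := by omega
      subst hje
      exact step

lemma compat_of_forward (P : S ≃ Fin n) (f : S → ℕ) (Q : S ≃ Fin n)
    (h : ∀ a b, Q a < Q b → (f a < f b ∨ (f a = f b ∧ P a < P b))) : Compat P f Q := by
  intro a b
  refine ⟨h a b, fun hr => ?_⟩
  rcases lt_trichotomy (Q a) (Q b) with h1 | h1 | h1
  · exact h1
  · have hab : a = b := Q.injective h1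
    subst hab
    rcases hr with h | ⟨_, h⟩ <;> exact absurd h (lt_irrefl _)
  · rcases h b a h1 with h2 | ⟨h2, h2'⟩ <;> rcases hr with h3 | ⟨h3, h3'⟩
    · omega
    · omega
    · omega
    · exact absurd (h2'.trans h3') (lt_irrefl _)

lemma compat_ped (P Q : S ≃ Fin n) : Compat P (ped P Q) Q := by
  apply compat_of_forward
  intro a b hab
  have h := chain P Q (Q b) (Q b).isLt (Q a) hab
  have e1 : (⟨((Q a : ℕ)), (Q a).isLt.trans_le le_rfl⟩ : Fin n) = Q a := rfl
  simpa [ped_eq_cnt, Fin.eta, Equiv.symm_apply_apply] using h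

lemma orderIso_fin_apply (e : Fin n ≃o Fin n) (i : Fin n) : e i = i := by
  rw [Subsingleton.elim e (OrderIso.refl _)]; rfl

lemma compat_unique {P : S ≃ Fin n} {f : S → ℕ} {Q Q' : S ≃ Fin n}
    (h : Compat P f Q) (h' : Compat P f Q') : Q = Q' := by
  have key : ∀ a b, Q a < Q b ↔ Q' a < Q' b := fun a b => (h a b).trans (h' a b).symm
  let e : Fin n ≃o Fin n :=
    { toEquiv := Q.symm.trans Q'
      map_rel_iff' := by
        intro i j
        simp only [Equiv.trans_apply, Equiv.coe_fn_mk]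
        rw [← not_lt, ← not_lt]
        apply not_congr
        rw [← key (Q.symm j) (Q.symm i)]
        simp }
  apply Equiv.ext
  intro a
  have h2 := orderIso_fin_apply e (Q a)
  have h3 : Q' (Q.symm (Q a)) = Q a := h2
  rw [Equiv.symm_apply_apply] at h3
  exact h3.symm

lemma compat_exists [Fintype S] (hn : Fintype.card S = n) (P : S ≃ Fin n) (f : S → ℕ) :
    ∃ Q : S ≃ Fin n, Compat P f Q := by
  classical
  let κ : S → ℕ ×ₗ Fin n := fun a => toLex (f a, P a)
  have hκ : Function.Injective κ := by
    intro a b h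
    have h2 : (f a, P a) = (f b, P b) := h
    exact P.injective (congrArg Prod.snd h2)
  have hcard : (Finset.univ.image κ).card = n := by
    rw [Finset.card_image_of_injective _ hκ, Finset.card_univ, hn]
  let e := Finset.orderIsoOfFin _ hcard
  let b : S ≃ {x // x ∈ Finset.univ.image κ} :=
    Equiv.ofBijective (fun a => ⟨κ a, Finset.mem_image_of_mem κ (Finset.mem_univ a)⟩)
      ⟨fun a b h => hκ (Subtype.ext_iff.1 h), by
        rintro ⟨x, hx⟩
        rcases Finset.mem_image.1 hx with ⟨a, _, rfl⟩
        exact ⟨a, rfl⟩⟩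
  refine ⟨b.trans e.symm.toEquiv, compat_of_forward _ _ _ ?_⟩
  intro a c h
  have h' : e.symm (b a) < e.symm (b c) := h
  have h2 : b a < b c := e.symm.lt_iff_lt.mp h'
  have h3 : κ a < κ c := h2
  rw [show κ a = toLex (f a, P a) from rfl, show κ c = toLex (f c, P c) from rfl,
    Prod.Lex.lt_iff] at h3
  exact h3

lemma qof_compat (P : S ≃ Fin n) (f : S → ℕ) (h : ∃ Q, Compat P f Q) :
    Compat P f (QOf P f) := by
  rw [QOf, dif_pos h]; exact h.choose_spec

lemma qof_eq (P : S ≃ Fin n) {f : S → ℕ} {Q : S ≃ Fin n} (h : Compat P f Q) : QOf P f = Q :=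
  compat_unique (qof_compat P f ⟨Q, h⟩) h

lemma qof_linext [PartialOrder S] [Fintype S] (hn : Fintype.card S = n) (P : S ≃ Fin n)
    (hP : IsLinExt n P) {f : S → ℕ} (hf : Monotone f) : IsLinExt n (QOf P f) := by
  have hc := qof_compat P f (compat_exists hn P f)
  intro a b hab
  rcases eq_or_ne a b with rfl | hne
  · exact le_refl _
  · have h1 : f a ≤ f b := hf hab
    have h2 : P a < P b := lt_of_le_of_ne (hP a b hab) (fun h => hne (P.injective h))
    have : QOf P f a < QOf P f b := (hc a b).2
      (by rcases lt_or_eq_of_le h1 with h | h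
          · exact Or.inl h
          · exact Or.inr ⟨h, h2⟩)
    exact this.le


section Key
variable (P Q : S ≃ Fin n) (f : S → ℕ)

lemma key (hc : Compat P f Q) :
    ∀ k, ∀ (hk : k < n),
      cnt P Q k ≤ f (Q.symm ⟨k, hk⟩) ∧
      ∀ j, ∀ (hjn : j < n), j ≤ k →
        f (Q.symm ⟨j, hjn⟩) + cnt P Q k ≤ f (Q.symm ⟨k, hk⟩) + cnt P Q j := by
  intro k
  induction k with
  | zero =>
    intro hk
    refine ⟨by simp [cnt], ?_⟩
    intro j hjn hj
    have hj0 : j = 0 := Nat.le_zero.1 hj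
    subst hj0
    have : f (Q.symm ⟨0, hjn⟩) = f (Q.symm ⟨0, hk⟩) := rfl
    omega
  | succ k ih =>
    intro hk
    have hk' : k < n := Nat.lt_of_succ_lt hk
    obtain ⟨ih1, ih2⟩ := ih hk'
    have hQlt : Q (Q.symm ⟨k, hk'⟩) < Q (Q.symm ⟨k + 1, hk⟩) := by
      simp [Fin.lt_def]
    have hstep := (hc _ _).1 hQlt
    have hfle : f (Q.symm ⟨k, hk'⟩) ≤ f (Q.symm ⟨k + 1, hk⟩) := by
      rcases hstep with h | ⟨h, _⟩
      · exact h.le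
      · exact h.le
    by_cases hd : disag P Q k
    · have hflt : f (Q.symm ⟨k, hk'⟩) < f (Q.symm ⟨k + 1, hk⟩) := by
        rcases hstep with h | ⟨_, h⟩
        · exact h
        · obtain ⟨hw, hlt⟩ := hd
          exact absurd h (asymm hlt)
      have hcnt : cnt P Q (k + 1) = cnt P Q k + 1 := by rw [cnt_succ]; simp [hd]
      refine ⟨by omega, ?_⟩
      intro j hjn hj
      rcases Nat.lt_succ_iff_lt_or_eq.1 (Nat.lt_succ_of_le hj) with hjk | hjk
      · have hje : j ≤ k := by omega
        have h2 := ih2 j hjn hje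
        omega
      · subst hjk
        have : f (Q.symm ⟨k + 1, hjn⟩) = f (Q.symm ⟨k + 1, hk⟩) := rfl
        omega
    · have hcnt : cnt P Q (k + 1) = cnt P Q k := by rw [cnt_succ]; simp [hd]
      refine ⟨by omega, ?_⟩
      intro j hjn hj
      rcases Nat.lt_succ_iff_lt_or_eq.1 (Nat.lt_succ_of_le hj) with hjk | hjk
      · have hje : j ≤ k := by omega
        have h2 := ih2 j hjn hje
        omega
      · subst hjk
        have : f (Q.symm ⟨k + 1, hjn⟩) = f (Q.symm ⟨k + 1, hk⟩) := rfl
        omega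

lemma ped_le (hc : Compat P f Q) (a : S) : ped P Q a ≤ f a := by
  have h := (key P Q f hc (Q a) (Q a).isLt).1
  rw [ped_eq_cnt]
  simpa using h

lemma diff_mono (hc : Compat P f Q) {i j : Fin n} (hij : i ≤ j) :
    f (Q.symm i) - ped P Q (Q.symm i) ≤ f (Q.symm j) - ped P Q (Q.symm j) := by
  have h := (key P Q f hc j j.isLt).2 i i.isLt hij
  have h1 := ped_le P Q f hc (Q.symm i)
  have h2 := ped_le P Q f hc (Q.symm j)
  have e1 : ped P Q (Q.symm i) = cnt P Q i := by
    rw [ped_eq_cnt]; simp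
  have e2 : ped P Q (Q.symm j) = cnt P Q j := by
    rw [ped_eq_cnt]; simp
  have e3 : f (Q.symm ⟨(i : ℕ), i.isLt⟩) = f (Q.symm i) := by congr
  have e4 : f (Q.symm ⟨(j : ℕ), j.isLt⟩) = f (Q.symm j) := by congr
  rw [e3, e4] at h
  omega

end Key
end Stmt18Aux

lemma map_univ_eq [Fintype S] (Q : S ≃ Fin n) (g : S → ℕ) :
    Finset.univ.val.map g = ↑(List.ofFn (fun i => g (Q.symm i))) := by
  rw [← Fin.univ_val_map]
  conv_lhs => rw [← Finset.map_univ_equiv Q.symm]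
  rw [Finset.map_val, Multiset.map_map]
  rfl

lemma mono_eq_of_multiset {D D' : Fin n → ℕ} (hD : Monotone D) (hD' : Monotone D')
    (h : (↑(List.ofFn D) : Multiset ℕ) = ↑(List.ofFn D')) : D = D' := by
  apply List.ofFn_injective
  exact List.Perm.eq_of_sortedLE (List.sortedLE_ofFn_iff.2 hD) (List.sortedLE_ofFn_iff.2 hD')
    (Multiset.coe_eq_coe.1 h)

open Stmt18Aux in
/-- for a fixed linear extension `P` of a finite poset `S` with
`n` elements, `b_St` is a bijection between reverse partitions on `S`
(order-preserving maps `S → ℤ≥0`) and the product of the set of `P`-pedestals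
with the set of partitions with at most `n` parts; moreover the bijection is
volume-additive. -/
theorem stmt18 {S : Type} [PartialOrder S] [Fintype S] (n : ℕ)
    (hn : Fintype.card S = n) (P : S ≃ Fin n) (hP : IsLinExt n P) :
    Set.BijOn (bSt P) {f : S → ℕ | Monotone f}
      (({g : S → ℕ | ∃ Q : S ≃ Fin n, IsLinExt n Q ∧ g = ped P Q}) ×ˢ
        {m : Multiset ℕ | Multiset.card m = n}) ∧
    ∀ f : S → ℕ, Monotone f →
      ∑ s : S, f s = (∑ s : S, (bSt P f).1 s) + (bSt P f).2.sum := by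
  classical
  have hex : ∀ f : S → ℕ, ∃ Q, Compat P f Q := fun f => compat_exists hn P f
  refine ⟨⟨?_, ?_, ?_⟩, ?_⟩
  · -- MapsTo
    intro f hf
    refine ⟨⟨QOf P f, qof_linext hn P hP hf, rfl⟩, ?_⟩
    show Multiset.card _ = n
    simp only [bSt, Multiset.card_map]
    rw [← Finset.card_def, Finset.card_univ, hn]
  · -- InjOn
    intro f hf f' hf' heq
    have hc := qof_compat P f (hex f)
    have hc' := qof_compat P f' (hex f')
    have hped : ped P (QOf P f) = ped P (QOf P f') := congrArg Prod.fst heq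
    have hQ : QOf P f = QOf P f' :=
      compat_unique (compat_ped P (QOf P f))
        (by rw [hped]; exact compat_ped P (QOf P f'))
    set Q := QOf P f with hQdef
    have hc'' : Compat P f' Q := by rw [hQ]; exact hc'
    have hmul : Finset.univ.val.map (fun a => f a - ped P Q a) =
        Finset.univ.val.map (fun a => f' a - ped P Q a) := by
      have h2 := congrArg Prod.snd heq
      simp only [bSt] at h2
      rw [← hQ] at h2
      exact h2
    rw [map_univ_eq Q, map_univ_eq Q] at hmul
    have hD : (fun i => f (Q.symm i) - ped P Q (Q.symm i)) =
        (fun i => f' (Q.symm i) - ped P Q (Q.symm i)) :=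
      mono_eq_of_multiset (fun i j hij => diff_mono P Q f hc hij)
        (fun i j hij => diff_mono P Q f' hc'' hij) hmul
    funext a
    have h1 := ped_le P Q f hc a
    have h2 := ped_le P Q f' hc'' a
    have h3 := congrFun hD (Q a)
    simp only [Equiv.symm_apply_apply] at h3
    omega
  · -- SurjOn
    rintro ⟨g, m⟩ ⟨⟨Q₀, hQ₀, hg⟩, hm⟩
    have hm' : Multiset.card m = n := hm
    subst hg
    set L := Multiset.sort m (· ≤ ·) with hLdef
    have hL : L.length = n := by rw [hLdef, Multiset.length_sort, hm']
    set μ : Fin n → ℕ := fun i => L.get (Fin.cast hL.symm i) with hμdef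
    have hμmono : Monotone μ := by
      intro i j hij
      exact (Multiset.pairwise_sort m _).rel_get_of_le (by simpa using hij)
    set f : S → ℕ := fun a => ped P Q₀ a + μ (Q₀ a) with hfdef
    have hcg : Compat P (ped P Q₀) Q₀ := compat_ped P Q₀
    have hQ0mono : ∀ a b : S, Q₀ a ≤ Q₀ b → ped P Q₀ a ≤ ped P Q₀ b := by
      intro a b h
      rw [ped_eq_cnt, ped_eq_cnt]
      exact cnt_mono P Q₀ h
    have hfmono : Monotone f := by
      intro a b hab
      have h1 : Q₀ a ≤ Q₀ b := hQ₀ a b hab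
      exact add_le_add (hQ0mono _ _ h1) (hμmono h1)
    have hcf : Compat P f Q₀ := by
      apply compat_of_forward
      intro a b hab
      have h1 : ped P Q₀ a ≤ ped P Q₀ b := hQ0mono _ _ hab.le
      have h2 : μ (Q₀ a) ≤ μ (Q₀ b) := hμmono hab.le
      rcases eq_or_lt_of_le (show f a ≤ f b from add_le_add h1 h2) with he | hlt
      · right
        refine ⟨he, ?_⟩
        have hfe : ped P Q₀ a + μ (Q₀ a) = ped P Q₀ b + μ (Q₀ b) := he
        have hpe : ped P Q₀ a = ped P Q₀ b := by omega
        rcases (hcg a b).1 hab with h | ⟨_, h⟩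
        · omega
        · exact h
      · left; exact hlt
    refine ⟨f, hfmono, ?_⟩
    have hQf : QOf P f = Q₀ := qof_eq P hcf
    have hofn : List.ofFn μ = L := by
      apply List.ext_get
      · simp [hL]
      · intro i h1 h2
        simp [hμdef, List.get_ofFn]
    have comp2 : Finset.univ.val.map (fun a => f a - ped P (QOf P f) a) = m := by
      rw [hQf]
      have he : (fun a => f a - ped P Q₀ a) = fun a => μ (Q₀ a) := by
        funext a; simp [hfdef]
      rw [he, map_univ_eq Q₀]
      have he2 : (fun i => μ (Q₀ (Q₀.symm i))) = μ := by
        funext i; rw [Equiv.apply_symm_apply]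
      rw [he2, hofn, hLdef, Multiset.sort_eq]
    exact Prod.ext (by simp only [bSt, hQf]) comp2
  · -- volume
    intro f hf
    have hc := qof_compat P f (hex f)
    have hle := fun a => ped_le P (QOf P f) f hc a
    have h2 : (bSt P f).2.sum = ∑ a : S, (f a - ped P (QOf P f) a) := rfl
    rw [h2]
    simp only [bSt]
    rw [← Finset.sum_add_distrib]
    apply Finset.sum_congr rfl
    intro a _
    have := hle a
    omega
end
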